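/- Let C = {r ∈ ℝ^T : 0 ≤ r ≤ r̄, Σ_t c r(t) = d} with c > 0, r̄ > 0 componentwise, and 0 < d < c Σ_t r̄(t). Then the Euclidean projection of any x ∈ ℝ^T onto C exists and is unique, and it is characterized by: Π_C(x)(t) = clamp(x(t) + ν, 0, r̄(t)) for some ν ∈ ℝ chosen so that the equality constraint Σ_t c · clamp(x(t)+ν, 0, r̄(t)) = d holds. -/

import Mathlib

/-- Let `C = {r ∈ ℝ^T : 0 ≤ r ≤ r̄, ∑ t, c * r t = d}` with `c > 0`, `r̄ > 0` componentwise,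
and `0 < d < c * ∑ t, r̄ t`. Then the Euclidean projection of any `x ∈ ℝ^T` onto `C` exists
and is unique, and every projection is characterized by
`Π_C(x) t = clamp (x t + ν) 0 (r̄ t)` for some `ν ∈ ℝ` chosen so that the equality
constraint `∑ t, c * clamp (x t + ν) 0 (r̄ t) = d` holds. -/

theorem projection_box_hyperplane_clamp
    (T : ℕ) (c d : ℝ) (hc : 0 < c)
    (rbar : EuclideanSpace ℝ (Fin T)) (hrbar : ∀ t, 0 < rbar t)
    (hd0 : 0 < d) (hd1 : d < c * ∑ t, rbar t)
    (x : EuclideanSpace ℝ (Fin T)) :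
    (∃! p : EuclideanSpace ℝ (Fin T),
        (p ∈ {r : EuclideanSpace ℝ (Fin T) |
            (∀ t, 0 ≤ r t ∧ r t ≤ rbar t) ∧ ∑ t, c * r t = d} ∧
          ∀ z ∈ {r : EuclideanSpace ℝ (Fin T) |
              (∀ t, 0 ≤ r t ∧ r t ≤ rbar t) ∧ ∑ t, c * r t = d},
            dist x p ≤ dist x z)) ∧
      ∀ p : EuclideanSpace ℝ (Fin T),
        (p ∈ {r : EuclideanSpace ℝ (Fin T) |
            (∀ t, 0 ≤ r t ∧ r t ≤ rbar t) ∧ ∑ t, c * r t = d} ∧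
          ∀ z ∈ {r : EuclideanSpace ℝ (Fin T) |
              (∀ t, 0 ≤ r t ∧ r t ≤ rbar t) ∧ ∑ t, c * r t = d},
            dist x p ≤ dist x z) →
        ∃ ν : ℝ, (∀ t, p t = min (max (x t + ν) 0) (rbar t)) ∧
          ∑ t, c * min (max (x t + ν) 0) (rbar t) = d := by
  -- T = 0 is impossible
  rcases Nat.eq_zero_or_pos T with hT | hT
  · subst hT
    simp at hd1
    linarith
  haveI : Nonempty (Fin T) := ⟨⟨0, hT⟩⟩
  -- the function φ
  set φ : ℝ → ℝ := fun ν => ∑ t, c * min (max (x t + ν) 0) (rbar t) with hφdef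
  have hφcont : Continuous φ := by
    apply continuous_finset_sum
    intro t _
    exact continuous_const.mul
      (((continuous_const.add continuous_id).max continuous_const).min continuous_const)
  set a : ℝ := -(Finset.univ.sup' Finset.univ_nonempty (fun t => x t)) with ha
  set b : ℝ := Finset.univ.sup' Finset.univ_nonempty (fun t => rbar t - x t) with hb
  have hxa : ∀ t, x t + a ≤ 0 := by
    intro t
    have := Finset.le_sup' (fun t => x t) (Finset.mem_univ t)
    simp only [ha]; linarith
  have hxb : ∀ t, rbar t ≤ x t + b := by
    intro t
    have := Finset.le_sup' (fun t => rbar t - x t) (Finset.mem_univ t)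
    simp only [hb]; linarith
  have hφa : φ a = 0 := by
    apply Finset.sum_eq_zero
    intro t _
    rw [max_eq_right (hxa t), min_eq_left (hrbar t).le, mul_zero]
  have hφb : φ b = c * ∑ t, rbar t := by
    rw [Finset.mul_sum]
    apply Finset.sum_congr rfl
    intro t _
    rw [max_eq_left (le_trans (hrbar t).le (hxb t)), min_eq_right (hxb t)]
  have hab : a ≤ b := by
    have h1 := hxa ⟨0, hT⟩
    have h2 := hxb ⟨0, hT⟩
    have h3 := hrbar ⟨0, hT⟩
    linarith
  -- get ν by IVT
  obtain ⟨ν, -, hν⟩ : ∃ ν ∈ Set.Icc a b, φ ν = d := by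
    have := intermediate_value_Icc hab hφcont.continuousOn
    have hd : d ∈ Set.Icc (φ a) (φ b) := by
      rw [hφa, hφb]; exact ⟨hd0.le, hd1.le⟩
    exact this hd
  -- the candidate projection
  set p : EuclideanSpace ℝ (Fin T) := WithLp.toLp 2 (fun t => min (max (x t + ν) 0) (rbar t)) with hp
  have hpmem : (∀ t, 0 ≤ p t ∧ p t ≤ rbar t) ∧ ∑ t, c * p t = d := by
    constructor
    · intro t
      exact ⟨le_min (le_max_right _ _) (hrbar t).le, min_le_right _ _⟩
    · exact hν
  -- key inequality per coordinate
  have hkey : ∀ (z : EuclideanSpace ℝ (Fin T)), (∀ t, 0 ≤ z t ∧ z t ≤ rbar t) →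
      ∀ t, (x t + ν - p t) * (z t - p t) ≤ 0 := by
    intro z hz t
    obtain ⟨hz0, hz1⟩ := hz t
    by_cases h1 : x t + ν ≤ 0
    · have hpt : p t = 0 := by
        simp only [hp, PiLp.toLp_apply]
        rw [max_eq_right h1, min_eq_left (hrbar t).le]
      rw [hpt]
      simp only [sub_zero]
      exact mul_nonpos_of_nonpos_of_nonneg h1 hz0
    · push_neg at h1
      by_cases h2 : rbar t ≤ x t + ν
      · have hpt : p t = rbar t := by
          simp only [hp, PiLp.toLp_apply]
          rw [max_eq_left (le_trans (hrbar t).le h2), min_eq_right h2]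
        rw [hpt]
        exact mul_nonpos_of_nonneg_of_nonpos (by linarith) (by linarith)
      · push_neg at h2
        have hpt : p t = x t + ν := by
          simp only [hp, PiLp.toLp_apply]
          rw [max_eq_left h1.le, min_eq_left h2.le]
        rw [hpt]
        simp
  -- inner product inequality
  have hinner : ∀ (z : EuclideanSpace ℝ (Fin T)),
      ((∀ t, 0 ≤ z t ∧ z t ≤ rbar t) ∧ ∑ t, c * z t = d) →
      (inner ℝ (x - p) (z - p) : ℝ) ≤ 0 := by
    intro z ⟨hz, hzsum⟩
    have hsum0 : ∑ t, (z t - p t) = 0 := by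
      have h1 : c * ∑ t, z t = c * ∑ t, p t := by
        rw [Finset.mul_sum, Finset.mul_sum, hzsum, hpmem.2]
      have h2 : ∑ t, z t = ∑ t, p t := mul_left_cancel₀ hc.ne' h1
      rw [Finset.sum_sub_distrib, h2, sub_self]
    have : (inner ℝ (x - p) (z - p) : ℝ) = ∑ t, (x t - p t) * (z t - p t) := by
      rw [PiLp.inner_apply]
      apply Finset.sum_congr rfl
      intro t _
      simp [RCLike.inner_apply]
      ring
    rw [this]
    have : ∑ t, (x t - p t) * (z t - p t)
        = (∑ t, (x t + ν - p t) * (z t - p t)) - ν * ∑ t, (z t - p t) := by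
      rw [Finset.mul_sum, ← Finset.sum_sub_distrib]
      apply Finset.sum_congr rfl
      intro t _
      ring
    rw [this, hsum0, mul_zero, sub_zero]
    exact Finset.sum_nonpos (fun t _ => hkey z hz t)
  -- distance comparison
  have hdist : ∀ (z : EuclideanSpace ℝ (Fin T)),
      ((∀ t, 0 ≤ z t ∧ z t ≤ rbar t) ∧ ∑ t, c * z t = d) →
      ‖x - p‖ ^ 2 + ‖p - z‖ ^ 2 ≤ ‖x - z‖ ^ 2 := by
    intro z hz
    have hexp : ‖x - z‖ ^ 2 = ‖x - p‖ ^ 2 + 2 * (inner ℝ (x - p) (p - z) : ℝ) + ‖p - z‖ ^ 2 := by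
      have : x - z = (x - p) + (p - z) := by abel
      rw [this, norm_add_sq_real]
    have h1 : (inner ℝ (x - p) (p - z) : ℝ) = -(inner ℝ (x - p) (z - p) : ℝ) := by
      rw [← inner_neg_right]; congr 1; abel
    have h2 := hinner z hz
    rw [hexp, h1]
    linarith
  have hmin : ∀ z ∈ {r : EuclideanSpace ℝ (Fin T) |
      (∀ t, 0 ≤ r t ∧ r t ≤ rbar t) ∧ ∑ t, c * r t = d}, dist x p ≤ dist x z := by
    intro z hz
    rw [dist_eq_norm, dist_eq_norm]
    have := hdist z hz
    have h1 : (0:ℝ) ≤ ‖x - p‖ := norm_nonneg _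
    have h2 : (0:ℝ) ≤ ‖x - z‖ := norm_nonneg _
    have h3 : (0:ℝ) ≤ ‖p - z‖ ^ 2 := sq_nonneg _
    nlinarith
  have huniq : ∀ q : EuclideanSpace ℝ (Fin T),
      ((q ∈ {r : EuclideanSpace ℝ (Fin T) |
          (∀ t, 0 ≤ r t ∧ r t ≤ rbar t) ∧ ∑ t, c * r t = d} ∧
        ∀ z ∈ {r : EuclideanSpace ℝ (Fin T) |
            (∀ t, 0 ≤ r t ∧ r t ≤ rbar t) ∧ ∑ t, c * r t = d},
          dist x q ≤ dist x z)) → q = p := by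
    intro q ⟨hqmem, hqmin⟩
    have h1 : dist x q ≤ dist x p := hqmin p hpmem
    have h2 := hdist q hqmem
    rw [dist_eq_norm, dist_eq_norm] at h1
    have h3 : ‖p - q‖ ^ 2 ≤ 0 := by nlinarith [norm_nonneg (x - q), norm_nonneg (x - p)]
    have h4 : ‖p - q‖ = 0 := by nlinarith [norm_nonneg (p - q)]
    have := norm_sub_eq_zero_iff.mp h4
    exact this.symm
  refine ⟨⟨p, ⟨hpmem, hmin⟩, fun q hq => huniq q hq⟩, ?_⟩
  intro q hq
  have := huniq q hq
  subst this
  exact ⟨ν, fun t => rfl, hν⟩
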